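/- With notation as above, the multiplicity of [t_i,t_j) in B equals n{t_i,t_j) - n{t_{i-1},t_j) - N(t_{i-1},t_j), where n{s,t_j) is the number of intervals in B containing s with open right endpoint t_j and N(t_{i-1},t_j) is the multiplicity of the open interval (t_{i-1},t_j). -/
import Mathlib


open Classical Multiset

noncomputable section

/-- The four kinds of intervals: closed-closed, closed-open, open-closed, open-open. -/
inductive BarKind : Type
  | cc | co | oc | oo
  deriving DecidableEq

/-- A real interval of one of the four types, with endpoints `a ≤ b`. -/
structure Bar : Type where
  kind : BarKind
  a : ℝ
  b : ℝ

instance : DecidableEq Bar := Classical.decEq _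

namespace Bar

/-- The underlying set of points of the interval. -/
def toSet (I : Bar) : Set ℝ :=
  match I.kind with
  | .cc => Set.Icc I.a I.b
  | .co => Set.Ico I.a I.b
  | .oc => Set.Ioc I.a I.b
  | .oo => Set.Ioo I.a I.b

/-- Nonemptiness condition: `a ≤ b` for closed intervals, `a < b` otherwise. -/
def Valid (I : Bar) : Prop :=
  match I.kind with
  | .cc => I.a ≤ I.b
  | _ => I.a < I.b

def rightOpen (I : Bar) : Prop := I.kind = .co ∨ I.kind = .oo
def leftOpen (I : Bar) : Prop := I.kind = .oc ∨ I.kind = .oo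
def leftClosed (I : Bar) : Prop := I.kind = .cc ∨ I.kind = .co

end Bar

/-- `i(t,t')`: the number of intervals of `B` containing `[t,t']`. -/
def icount (B : Multiset Bar) (t t' : ℝ) : ℕ :=
  countP (fun I => Set.Icc t t' ⊆ I.toSet) B

/-- `l(t)`: the number of intervals of `B` containing `t`. -/
def lcount (B : Multiset Bar) (t : ℝ) : ℕ :=
  countP (fun I => t ∈ I.toSet) B

/-- `l⁺(t;t')`: intervals of `B` containing `t` with open right endpoint `≤ t'`. -/
def lplus (B : Multiset Bar) (t t' : ℝ) : ℕ :=
  countP (fun I => t ∈ I.toSet ∧ I.rightOpen ∧ I.b ≤ t') B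

/-- `l⁻(t;t'')`: intervals of `B` containing `t` with open left endpoint `≥ t''`. -/
def lminus (B : Multiset Bar) (t t'' : ℝ) : ℕ :=
  countP (fun I => t ∈ I.toSet ∧ I.leftOpen ∧ t'' ≤ I.a) B

/-- `e(t;t',t'')`: open intervals `(a,b)` of `B` with `t'' ≤ a < t < b ≤ t'`. -/
def ecount (B : Multiset Bar) (t t' t'' : ℝ) : ℕ :=
  countP (fun I => I.kind = .oo ∧ t'' ≤ I.a ∧ I.a < t ∧ t < I.b ∧ I.b ≤ t') B

/-- All endpoints of intervals of `B` lie among the critical values `t 0, …, t N`. -/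
def endpointsIn (B : Multiset Bar) (t : ℕ → ℝ) (N : ℕ) : Prop :=
  ∀ I ∈ B, (∃ i ≤ N, I.a = t i) ∧ (∃ j ≤ N, I.b = t j)


lemma key_point (t : ℕ → ℝ) (ht : StrictMono t) (i j : ℕ) (hi1 : 1 ≤ i) (hij : i < j)
    (a : Bar) (k m : ℕ) (hak : a.a = t k) (ham : a.b = t m) :
    ((if (t i ∈ a.toSet ∧ a.rightOpen ∧ a.b = t j) then 1 else 0) : ℕ)
      = (if (t (i-1) ∈ a.toSet ∧ a.rightOpen ∧ a.b = t j) then 1 else 0)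
      + (if (⟨.co, t i, t j⟩ : Bar) = a then 1 else 0)
      + (if (⟨.oo, t (i-1), t j⟩ : Bar) = a then 1 else 0) := by
  obtain ⟨kind, aa, ab⟩ := a
  simp only at hak ham
  subst hak ham
  cases kind <;>
    simp only [Bar.toSet, Bar.rightOpen, Bar.mk.injEq, Set.mem_Icc, Set.mem_Ico, Set.mem_Ioc,
      Set.mem_Ioo, ht.le_iff_le, ht.lt_iff_lt, ht.injective.eq_iff, and_true, true_and,
      false_and, and_false, if_false, reduceCtorEq, false_or, or_false, if_true] <;>
    split_ifs <;> omega

lemma aux_sum (t : ℕ → ℝ) (ht : StrictMono t) (i j : ℕ) (hi1 : 1 ≤ i) (hij : i < j)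
    (B : Multiset Bar) (hB : ∀ I ∈ B, (∃ k, I.a = t k) ∧ (∃ m, I.b = t m)) :
    countP (fun I => t i ∈ I.toSet ∧ I.rightOpen ∧ I.b = t j) B
      = countP (fun I => t (i-1) ∈ I.toSet ∧ I.rightOpen ∧ I.b = t j) B
      + count (⟨.co, t i, t j⟩ : Bar) B + count (⟨.oo, t (i-1), t j⟩ : Bar) B := by
  induction B using Multiset.induction_on with
  | empty => simp
  | cons a s ih =>
    obtain ⟨⟨k, hk⟩, ⟨m, hm⟩⟩ := hB a (mem_cons_self a s)
    have hs : ∀ I ∈ s, (∃ k, I.a = t k) ∧ (∃ m, I.b = t m) :=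
      fun I hI => hB I (mem_cons_of_mem hI)
    have hkey := key_point t ht i j hi1 hij a k m hk hm
    simp only [countP_cons, count_cons, ih hs]
    omega

theorem stmt11 (N : ℕ) (t : ℕ → ℝ) (ht : StrictMono t)
    (B : Multiset Bar) (hB : endpointsIn B t N)
    (i j : ℕ) (hi1 : 1 ≤ i) (hij : i < j) (hjN : j ≤ N) :
    (count (⟨.co, t i, t j⟩ : Bar) B : ℤ) =
      (countP (fun I => t i ∈ I.toSet ∧ I.rightOpen ∧ I.b = t j) B : ℤ)
        - countP (fun I => t (i - 1) ∈ I.toSet ∧ I.rightOpen ∧ I.b = t j) B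
        - count (⟨.oo, t (i - 1), t j⟩ : Bar) B := by

  have hB' : ∀ I ∈ B, (∃ k, I.a = t k) ∧ (∃ m, I.b = t m) := by
    intro I hI
    obtain ⟨⟨k, _, hk⟩, ⟨m, _, hm⟩⟩ := hB I hI
    exact ⟨⟨k, hk⟩, ⟨m, hm⟩⟩
  have h := aux_sum t ht i j hi1 hij B hB'
  have h2 := congrArg (Nat.cast : ℕ → ℤ) h
  push_cast at h2
  linarith
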